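/- Let G be a connected graph on n ≥ 2 vertices with exactly two non-cut vertices. Then G is a path graph. -/

import Mathlib

open SimpleGraph

private lemma reach_induce_of_support {V : Type*} {G : SimpleGraph V} {s : Set V} :
    ∀ {x y : V} (p : G.Walk x y), (∀ z ∈ p.support, z ∈ s) →
    ∀ (hx : x ∈ s) (hy : y ∈ s), (G.induce s).Reachable ⟨x, hx⟩ ⟨y, hy⟩ := by
  intro x y p
  induction p with
  | nil => intro _ hx hy; rfl
  | @cons x u y h q ih =>
    intro hs hx hy
    have hu : u ∈ s := hs u (by simp [Walk.support_cons])
    have hadj : (G.induce s).Adj ⟨x, hx⟩ ⟨u, hu⟩ := by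
      simp only [comap_adj, Function.Embedding.coe_subtype]
      exact h
    exact hadj.reachable.trans (ih (fun z hz => hs z (by simp [Walk.support_cons, hz])) hu hy)

private lemma noncut_of_max_dist {V : Type*} {G : SimpleGraph V} (hG : G.Connected)
    {u v : V} (hne : u ≠ v) (hmax : ∀ w, G.dist u w ≤ G.dist u v) :
    (G.induce ({v}ᶜ : Set V)).Connected := by
  have hne' : (u : V) ∈ ({v}ᶜ : Set V) := hne
  have key : ∀ x (hx : x ∈ ({v}ᶜ : Set V)),
      (G.induce ({v}ᶜ : Set V)).Reachable ⟨u, hne'⟩ ⟨x, hx⟩ := by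
    intro x hx
    classical
    obtain ⟨p, hp⟩ := hG.exists_walk_length_eq_dist u x
    have hsupp : ∀ z ∈ p.support, z ∈ ({v}ᶜ : Set V) := by
      intro z hz
      simp only [Set.mem_compl_iff, Set.mem_singleton_iff]
      intro hzv
      subst hzv
      have h1 := Walk.length_takeUntil_le p hz
      have h2 := p.take_spec hz
      have hlen : (p.takeUntil z hz).length + (p.dropUntil z hz).length = p.length := by
        rw [← Walk.length_append, h2]
      have hd1 : G.dist u z ≤ (p.takeUntil z hz).length := dist_le _
      have hd2 : G.dist z x ≤ (p.dropUntil z hz).length := dist_le _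
      have hzx : z ≠ x := by rintro rfl; exact hx rfl
      have hpos : 0 < G.dist z x := (hG z x).pos_dist_of_ne hzx
      have := hmax x
      omega
    exact reach_induce_of_support p hsupp hne' hx
  rw [connected_iff]
  exact ⟨fun a b => (key a.1 a.2).symm.trans (key b.1 b.2), ⟨⟨u, hne'⟩⟩⟩

open SimpleGraph

private lemma exists_two_noncut {V : Type*} [Finite V] {G : SimpleGraph V} (hG : G.Connected)
    (h2 : 1 < Nat.card V) :
    ∃ a b : V, a ≠ b ∧ (G.induce ({a}ᶜ : Set V)).Connected ∧
      (G.induce ({b}ᶜ : Set V)).Connected := by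
  have : Nontrivial V := Finite.one_lt_card_iff_nontrivial.mp h2
  obtain ⟨u0, x0, hux⟩ := exists_pair_ne V
  obtain ⟨a, ha⟩ := Finite.exists_max (G.dist u0)
  have hau : u0 ≠ a := by
    intro h
    have := ha x0
    have hpos : 0 < G.dist u0 x0 := (hG u0 x0).pos_dist_of_ne hux
    rw [← h, SimpleGraph.dist_self] at this
    omega
  obtain ⟨b, hb⟩ := Finite.exists_max (G.dist a)
  have hab : a ≠ b := by
    intro h
    have := hb u0
    have hpos : 0 < G.dist a u0 := (hG a u0).pos_dist_of_ne (Ne.symm hau)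
    rw [← h, SimpleGraph.dist_self] at this
    omega
  exact ⟨a, b, hab, noncut_of_max_dist hG hau ha, noncut_of_max_dist hG hab hb⟩

private lemma exists_adj_of_connected {V : Type*} {G : SimpleGraph V} (hG : G.Connected)
    (h2 : Nontrivial V) (x : V) : ∃ y, G.Adj x y := by
  obtain ⟨z, hz⟩ := exists_ne x
  obtain ⟨p⟩ := hG x z
  cases p with
  | nil => exact absurd rfl (Ne.symm hz)
  | cons h q => exact ⟨_, h⟩

private lemma noncut_of_noncut_del {V : Type*} {G : SimpleGraph V} {b : V}
    {u : ({b}ᶜ : Set V)} {x : V} (hbx : G.Adj b x) (hxu : x ≠ ↑u)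
    (h : ((G.induce ({b}ᶜ : Set V)).induce ({u}ᶜ : Set ({b}ᶜ : Set V))).Connected) :
    (G.induce (({(u : V)}ᶜ) : Set V)).Connected := by
  have hub : (u : V) ≠ b := fun h' => u.2 h'
  have hbu : b ∈ ({(u : V)}ᶜ : Set V) := fun h' => hub (by simpa using h'.symm)
  have hxb : x ≠ b := hbx.ne'
  have hxmem : x ∈ ({(u : V)}ᶜ : Set V) := hxu
  -- homomorphism from doubly-induced graph into G.induce {u}ᶜ
  let F : ((G.induce ({b}ᶜ : Set V)).induce ({u}ᶜ : Set ({b}ᶜ : Set V))) →g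
      (G.induce (({(u : V)}ᶜ) : Set V)) :=
    ⟨fun p => ⟨p.1.1, fun hp => p.2 (Subtype.ext hp)⟩, fun {p q} hpq => hpq⟩
  have key : ∀ y (hy : y ∈ (({(u : V)}ᶜ) : Set V)),
      (G.induce (({(u : V)}ᶜ) : Set V)).Reachable ⟨b, hbu⟩ ⟨y, hy⟩ := by
    intro y hy
    by_cases hyb : y = b
    · subst hyb; rfl
    · have hadjbx : (G.induce (({(u : V)}ᶜ) : Set V)).Adj ⟨b, hbu⟩ ⟨x, hxmem⟩ := by
        simp only [comap_adj, Function.Embedding.coe_subtype]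
        exact hbx
      have hx' : (⟨x, hxb⟩ : ({b}ᶜ : Set V)) ∈ ({u}ᶜ : Set ({b}ᶜ : Set V)) :=
        fun h' => hxu (congrArg Subtype.val h')
      have hy' : (⟨y, hyb⟩ : ({b}ᶜ : Set V)) ∈ ({u}ᶜ : Set ({b}ᶜ : Set V)) :=
        fun h' => hy (congrArg Subtype.val h')
      have hr := h.preconnected ⟨⟨x, hxb⟩, hx'⟩ ⟨⟨y, hyb⟩, hy'⟩
      have := hr.map F
      exact hadjbx.reachable.trans this
  rw [connected_iff]
  exact ⟨fun p q => (key p.1 p.2).symm.trans (key q.1 q.2), ⟨⟨b, hbu⟩⟩⟩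

private lemma master : ∀ (m : ℕ) (V : Type) (_ : Finite V) (G : SimpleGraph V),
    Nat.card V = m + 2 → G.Connected →
    {v : V | (G.induce ({v}ᶜ : Set V)).Connected}.ncard = 2 →
    ∀ v : V, (G.induce ({v}ᶜ : Set V)).Connected →
    ∃ φ : G ≃g SimpleGraph.pathGraph (m + 2), φ v = ⟨m + 1, by omega⟩ := by
  intro m
  induction m with
  | zero =>
    intro V _ G hcard hG h2 v hv
    obtain ⟨u, huv, huniq⟩ := (Nat.card_eq_two_iff' v).mp hcard
    have hnt : Nontrivial V := ⟨⟨u, v, huv⟩⟩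
    obtain ⟨y, hy⟩ := exists_adj_of_connected hG hnt v
    have hadj : G.Adj v u := (huniq y hy.ne') ▸ hy
    classical
    refine ⟨⟨⟨fun x => if x = v then 1 else 0, fun i => if i.val = 1 then v else u,
      ?_, ?_⟩, ?_⟩, ?_⟩
    · intro x
      dsimp only
      by_cases hx : x = v
      · simp [hx]
      · rw [if_neg hx]
        norm_num
        exact (huniq x hx).symm
    · intro i
      dsimp only
      by_cases hi : i.val = 1
      · rw [if_pos hi, if_pos rfl]
        exact Fin.ext hi.symm
      · rw [if_neg hi, if_neg huv]
        have : i.val = 0 := by omega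
        exact Fin.ext this.symm
    · intro x y
      simp only [Equiv.coe_fn_mk]
      rw [pathGraph_two_eq_top, top_adj]
      have hGadj : ∀ s t : V, s ≠ t → G.Adj s t := by
        intro s t hst
        by_cases hs : s = v
        · subst hs
          rw [huniq t (Ne.symm hst)]
          exact hadj
        · rw [huniq s hs]
          by_cases ht : t = v
          · subst ht; exact hadj.symm
          · exact absurd ((huniq s hs).trans (huniq t ht).symm) hst
      constructor
      · intro h
        have hxy : x ≠ y := by
          rintro rfl; exact h rfl
        exact hGadj x y hxy
      · intro h
        have hxy : x ≠ y := h.ne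
        by_cases hx : x = v <;> by_cases hy' : y = v
        · exact absurd (hx.trans hy'.symm) hxy
        · rw [if_pos hx, if_neg hy']; decide
        · rw [if_neg hx, if_pos hy']; decide
        · rw [huniq x hx, huniq y hy'] at hxy; exact absurd rfl hxy
    · simp only [RelIso.coe_fn_mk, Equiv.coe_fn_mk]
      rw [if_pos trivial]
      exact Fin.ext rfl
  | succ m ih =>
    intro V _ G hcard hG h2 v hv
    classical
    have hvNC : v ∈ {v : V | (G.induce ({v}ᶜ : Set V)).Connected} := hv
    obtain ⟨p, q, hpq, hset⟩ := Set.ncard_eq_two.mp h2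
    obtain ⟨a, hav, hNC⟩ : ∃ a, a ≠ v ∧
        {v : V | (G.induce ({v}ᶜ : Set V)).Connected} = {v, a} := by
      rcases (hset ▸ hvNC : v ∈ ({p, q} : Set V)) with h | h
      · exact ⟨q, by rw [← h] at hpq; exact fun hh => hpq hh.symm,
          by rw [hset, ← h]⟩
      · exact ⟨p, by rw [← h] at hpq; exact fun hh => hpq hh,
          by rw [hset, ← h, Set.pair_comm]⟩
    have hnt : Nontrivial V := Finite.one_lt_card_iff_nontrivial.mp (by omega)
    have hcardS : Nat.card ↥({v}ᶜ : Set V) = m + 2 := by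
      rw [Nat.card_coe_set_eq]
      have h1 := Set.ncard_add_ncard_compl ({v} : Set V)
      rw [Set.ncard_singleton] at h1
      omega
    obtain ⟨w, hw⟩ := exists_adj_of_connected hG hnt v
    have hwv : w ≠ v := hw.ne'
    have hwmem : w ∈ ({v}ᶜ : Set V) := hwv
    have hamem : a ∈ ({v}ᶜ : Set V) := hav
    have key : ∀ (u : ↥({v}ᶜ : Set V)) {z : V}, G.Adj v z → z ≠ (u : V) →
        ((G.induce ({v}ᶜ : Set V)).induce ({u}ᶜ : Set ↥({v}ᶜ : Set V))).Connected →
        (u : V) = a := by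
      intro u z hz hzu hu
      have hmem : (u : V) ∈ {v : V | (G.induce ({v}ᶜ : Set V)).Connected} :=
        noncut_of_noncut_del hz hzu hu
      rw [hNC] at hmem
      rcases hmem with h | h
      · exact absurd h u.2
      · exact h
    have hcardS' : 1 < Nat.card ↥({v}ᶜ : Set V) := by omega
    have huniqnbr : ∀ x, G.Adj v x → x = w := by
      intro x hx
      by_contra hxw
      obtain ⟨u1, u2, h12, hc1, hc2⟩ := exists_two_noncut hv hcardS'
      have key2 : ∀ (u : ↥({v}ᶜ : Set V)),
          ((G.induce ({v}ᶜ : Set V)).induce ({u}ᶜ : Set ↥({v}ᶜ : Set V))).Connected →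
          (u : V) = a := by
        intro u hu
        by_cases hxu : x = (u : V)
        · exact key u hw (by rw [← hxu]; exact fun h => hxw h.symm) hu
        · exact key u hx hxu hu
      exact h12 (Subtype.ext ((key2 u1 hc1).trans (key2 u2 hc2).symm))
    have hsub : ∀ (u : ↥({v}ᶜ : Set V)),
        ((G.induce ({v}ᶜ : Set V)).induce ({u}ᶜ : Set ↥({v}ᶜ : Set V))).Connected →
        (u : V) = w ∨ (u : V) = a := by
      intro u hu
      by_cases h : (u : V) = w
      · exact Or.inl h
      · exact Or.inr (key u hw (fun hh => h hh.symm) hu)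
    obtain ⟨u1, u2, h12, hc1, hc2⟩ := exists_two_noncut hv hcardS'
    have h1 := hsub u1 hc1
    have h2' := hsub u2 hc2
    have haw : a ≠ w := by
      rintro rfl
      rcases h1 with h | h <;> rcases h2' with h' | h' <;>
        exact h12 (Subtype.ext (h.trans h'.symm))
    have hwNC' : ((G.induce ({v}ᶜ : Set V)).induce
        ({(⟨w, hwmem⟩ : ↥({v}ᶜ : Set V))}ᶜ : Set ↥({v}ᶜ : Set V))).Connected := by
      rcases h1 with h | h
      · rwa [show u1 = ⟨w, hwmem⟩ from Subtype.ext h] at hc1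
      · rcases h2' with h' | h'
        · rwa [show u2 = ⟨w, hwmem⟩ from Subtype.ext h'] at hc2
        · exact absurd (Subtype.ext (h.trans h'.symm)) h12
    have haNC' : ((G.induce ({v}ᶜ : Set V)).induce
        ({(⟨a, hamem⟩ : ↥({v}ᶜ : Set V))}ᶜ : Set ↥({v}ᶜ : Set V))).Connected := by
      rcases h1 with h | h
      · rcases h2' with h' | h'
        · exact absurd (Subtype.ext (h.trans h'.symm)) h12
        · rwa [show u2 = ⟨a, hamem⟩ from Subtype.ext h'] at hc2
      · rwa [show u1 = ⟨a, hamem⟩ from Subtype.ext h] at hc1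
    have hn2 : {u : ↥({v}ᶜ : Set V) |
        ((G.induce ({v}ᶜ : Set V)).induce ({u}ᶜ : Set ↥({v}ᶜ : Set V))).Connected}.ncard = 2 := by
      have hseteq : {u : ↥({v}ᶜ : Set V) |
          ((G.induce ({v}ᶜ : Set V)).induce ({u}ᶜ : Set ↥({v}ᶜ : Set V))).Connected} =
          {⟨w, hwmem⟩, ⟨a, hamem⟩} := by
        ext u
        constructor
        · intro hu
          rcases hsub u hu with h | h
          · exact Or.inl (Subtype.ext h)
          · exact Or.inr (Subtype.ext h)
        · rintro (rfl | rfl)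
          · exact hwNC'
          · exact haNC'
      rw [hseteq, Set.ncard_pair (fun hh => haw (congrArg Subtype.val hh).symm)]
    obtain ⟨φ, hφ⟩ := ih (↥({v}ᶜ : Set V)) inferInstance (G.induce ({v}ᶜ : Set V))
      hcardS hv hn2 ⟨w, hwmem⟩ hwNC'
    refine ⟨⟨⟨fun x => if h : x = v then Fin.last (m + 2) else (φ ⟨x, h⟩).castSucc,
        fun i => if h : i = Fin.last (m + 2) then v else
          (φ.symm ⟨i.1, by
            have hne : i.1 ≠ m + 2 := fun hh => h (Fin.ext hh)
            have := i.isLt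
            omega⟩ : ↥({v}ᶜ : Set V)).1, ?_, ?_⟩, ?_⟩, ?_⟩
    · intro x
      dsimp only
      by_cases hx : x = v
      · simp [hx]
      · rw [dif_neg hx, dif_neg (Fin.ne_of_lt (Fin.castSucc_lt_last _))]
        simp only [Fin.coe_castSucc, Fin.eta, RelIso.symm_apply_apply]
    · intro i
      dsimp only
      by_cases hi : i = Fin.last (m + 2)
      · rw [dif_pos hi, dif_pos rfl, hi]
      · rw [dif_neg hi]
        rw [dif_neg (by
          exact fun hh => (φ.symm ⟨i.1, by
            have hne : i.1 ≠ m + 2 := fun hh2 => hi (Fin.ext hh2)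
            have := i.isLt
            omega⟩).2 hh)]
        have hlt : i.1 < m + 2 := by
          have hne : i.1 ≠ m + 2 := fun hh2 => hi (Fin.ext hh2)
          have := i.isLt
          omega
        have e := congrArg Fin.val (φ.apply_symm_apply ⟨i.1, hlt⟩)
        rw [Fin.ext_iff]
        exact e
    · intro x y
      simp only [Equiv.coe_fn_mk]
      by_cases hx : x = v <;> by_cases hy' : y = v
      · rw [hx, hy']
        simp only [dif_pos rfl]
        simp [SimpleGraph.irrefl]
      · rw [hx]
        rw [dif_pos rfl, dif_neg hy', pathGraph_adj]
        simp only [Fin.val_last, Fin.coe_castSucc]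
        have hlt : (φ ⟨y, hy'⟩).1 < m + 2 := (φ ⟨y, hy'⟩).isLt
        constructor
        · rintro (h | h)
          · omega
          · have heq : φ ⟨y, hy'⟩ = φ ⟨w, hwmem⟩ := by
              rw [hφ]; exact Fin.ext (by simp; omega)
            have := φ.toEquiv.injective heq
            have hyw : y = w := congrArg Subtype.val this
            rw [hyw]; exact hw
        · intro h
          right
          have hyw : y = w := huniqnbr y h
          have : (⟨y, hy'⟩ : ↥({v}ᶜ : Set V)) = ⟨w, hwmem⟩ := Subtype.ext hyw
          rw [this, hφ]
      · rw [hy']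
        rw [dif_pos rfl, dif_neg hx, pathGraph_adj]
        simp only [Fin.val_last, Fin.coe_castSucc]
        have hlt : (φ ⟨x, hx⟩).1 < m + 2 := (φ ⟨x, hx⟩).isLt
        constructor
        · rintro (h | h)
          · have heq : φ ⟨x, hx⟩ = φ ⟨w, hwmem⟩ := by
              rw [hφ]; exact Fin.ext (by simp; omega)
            have := φ.toEquiv.injective heq
            have hxw : x = w := congrArg Subtype.val this
            rw [hxw]; exact hw.symm
          · omega
        · intro h
          left
          have hxw : x = w := huniqnbr x h.symm
          have : (⟨x, hx⟩ : ↥({v}ᶜ : Set V)) = ⟨w, hwmem⟩ := Subtype.ext hxw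
          rw [this, hφ]
      · rw [dif_neg hx, dif_neg hy']
        have hmain : (SimpleGraph.pathGraph (m + 2)).Adj (φ ⟨x, hx⟩) (φ ⟨y, hy'⟩) ↔
            G.Adj x y := φ.map_rel_iff
        rw [pathGraph_adj, Fin.coe_castSucc, Fin.coe_castSucc, ← hmain, pathGraph_adj]
    · simp only [RelIso.coe_fn_mk, Equiv.coe_fn_mk, dif_pos rfl]
      exact Fin.ext (by simp)

/-- A connected graph on `n ≥ 2` vertices with exactly two non-cut vertices
is a path graph. -/
theorem eq_pathGraph_of_two_noncut {n : ℕ} (hn : 2 ≤ n) (G : SimpleGraph (Fin n))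
    (hG : G.Connected)
    (h2 : {v : Fin n | (G.induce ({v}ᶜ : Set (Fin n))).Connected}.ncard = 2) :
    Nonempty (G ≃g SimpleGraph.pathGraph n) := by
  obtain ⟨m, rfl⟩ : ∃ m, n = m + 2 := ⟨n - 2, by omega⟩
  obtain ⟨p, q, hpq, hset⟩ := Set.ncard_eq_two.mp h2
  have hp : p ∈ {v : Fin (m + 2) | (G.induce ({v}ᶜ : Set (Fin (m + 2)))).Connected} := by
    rw [hset]; exact Or.inl rfl
  obtain ⟨φ, -⟩ := master m (Fin (m + 2)) inferInstance G
    (by simp) hG h2 p hp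
  exact ⟨φ⟩
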